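/- Let K be an n×n real matrix with zero diagonal (K i i = 0). Suppose that for every permutation σ of {1,...,n}, Σ_i K i (σ i) ≥ 0 (i.e., the identity permutation minimizes the assignment cost). Then there exist real numbers v_1,...,v_n such that v_j − v_i ≤ K i j for all i, j. -/

import Mathlib

namespace Stmt4Aux
variable {n : ℕ}

/-- Cost of a walk given as a list of vertices. -/
def cost (K : Fin n → Fin n → ℝ) : List (Fin n) → ℝ
  | [] => 0
  | [_] => 0
  | a :: b :: l => K a b + cost K (b :: l)

theorem cost_concat (K : Fin n → Fin n → ℝ) :
    ∀ (l : List (Fin n)) (h : l ≠ []) (a : Fin n),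
      cost K (l ++ [a]) = cost K l + K (l.getLast h) a
  | [x], _, a => by simp [cost]
  | x :: y :: t, _, a => by
    have := cost_concat K (y :: t) (by simp) a
    simp only [List.cons_append, cost, List.append_eq] at this ⊢
    rw [this, List.getLast_cons (a := x) (show y :: t ≠ [] by simp)]
    ring

theorem cost_split (K : Fin n → Fin n → ℝ) :
    ∀ (l₁ : List (Fin n)) (a : Fin n) (l₂ : List (Fin n)),
      cost K (l₁ ++ a :: l₂) = cost K (l₁ ++ [a]) + cost K (a :: l₂)
  | [], a, l₂ => by simp [cost]
  | [x], a, l₂ => by simp [cost]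
  | x :: y :: t, a, l₂ => by
    have := cost_split K (y :: t) a l₂
    simp only [List.cons_append, cost, List.append_eq] at this ⊢
    rw [this]; ring

theorem cost_ge (K : Fin n → Fin n → ℝ) (C : ℝ) (hC0 : 0 ≤ C)
    (hC : ∀ i j, -C ≤ K i j) :
    ∀ l : List (Fin n), -((l.length : ℝ) * C) ≤ cost K l
  | [] => by simp [cost]
  | [x] => by simp [cost]; linarith
  | a :: b :: l => by
    have h1 := cost_ge K C hC0 hC (b :: l)
    have h2 := hC a b
    simp only [cost, List.length_cons] at h1 ⊢
    push_cast at h1 ⊢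
    linarith

theorem sum_formPerm (K : Fin n → Fin n → ℝ) (hdiag : ∀ i, K i i = 0) :
    ∀ (l : List (Fin n)) (a : Fin n), (a :: l).Nodup →
      ∑ i, K i ((a :: l).formPerm i) = cost K ((a :: l) ++ [a])
  | [], a, _ => by
    simp [List.formPerm_singleton, cost, hdiag]
  | b :: t, a, h => by
    have hnd : (b :: t).Nodup := h.of_cons
    have ha : a ∉ b :: t := (List.nodup_cons.mp h).1
    set τ := (b :: t).formPerm with hτ
    have IH := sum_formPerm K hdiag t b hnd
    set z := (b :: t).getLast (List.cons_ne_nil _ _) with hzdef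
    have hz_mem : z ∈ b :: t := List.getLast_mem _
    have haz : a ≠ z := fun e => ha (e ▸ hz_mem)
    have hτa : τ a = a := List.formPerm_apply_of_notMem ha
    have hτz : τ z = b := List.formPerm_apply_getLast b t
    have hform : ∀ i, (a :: b :: t).formPerm i = Equiv.swap a b (τ i) := by
      intro i
      rw [List.formPerm_cons_cons, Equiv.Perm.mul_apply]
    have key : ∀ i, i ≠ a → i ≠ z → Equiv.swap a b (τ i) = τ i := by
      intro i hia hiz
      apply Equiv.swap_apply_of_ne_of_ne
      · exact fun e => hia (τ.injective (e.trans hτa.symm))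
      · exact fun e => hiz (τ.injective (e.trans hτz.symm))
    have hsplit : ∀ f : Fin n → ℝ,
        ∑ i, f i = f a + f z + ∑ i ∈ (Finset.univ.erase a).erase z, f i := by
      intro f
      rw [← Finset.sum_erase_add _ _ (Finset.mem_univ a),
        ← Finset.sum_erase_add _ _
          (Finset.mem_erase.mpr ⟨haz.symm, Finset.mem_univ z⟩)]
      ring
    have hrest : ∑ i ∈ (Finset.univ.erase a).erase z, K i ((a :: b :: t).formPerm i)
        = ∑ i ∈ (Finset.univ.erase a).erase z, K i (τ i) := by
      apply Finset.sum_congr rfl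
      intro i hi
      rw [hform i, key i (Finset.mem_erase.mp (Finset.mem_erase.mp hi).2).1
        (Finset.mem_erase.mp hi).1]
    rw [hsplit (fun i => K i ((a :: b :: t).formPerm i))] at *
    rw [hsplit (fun i => K i (τ i))] at IH
    have h1 : (a :: b :: t).formPerm a = b := by
      rw [hform, hτa, Equiv.swap_apply_left]
    have h2 : (a :: b :: t).formPerm z = a := by
      rw [hform, hτz, Equiv.swap_apply_right]
    have hc1 : cost K ((b :: t) ++ [b]) = cost K (b :: t) + K z b :=
      cost_concat K (b :: t) (by simp) b
    have hc2 : cost K ((a :: b :: t) ++ [a])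
        = cost K (a :: b :: t) + K z a := by
      rw [cost_concat K (a :: b :: t) (by simp) a,
        List.getLast_cons (a := a) (show b :: t ≠ [] by simp)]
    have hc3 : cost K (a :: b :: t) = K a b + cost K (b :: t) := rfl
    simp only [h1, h2, hτa, hτz, hdiag] at *
    rw [hrest, hc2, hc3]
    linarith [IH, hc1]

theorem cycle_nonneg (K : Fin n → Fin n → ℝ) (hdiag : ∀ i, K i i = 0)
    (hopt : ∀ σ : Equiv.Perm (Fin n), 0 ≤ ∑ i, K i (σ i))
    (a : Fin n) (l : List (Fin n)) (h : (a :: l).Nodup) :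
    0 ≤ cost K ((a :: l) ++ [a]) := by
  have := hopt ((a :: l).formPerm)
  rwa [sum_formPerm K hdiag l a h] at this

theorem exists_dup {α : Type*} :
    ∀ (p : List α), ¬ p.Nodup → ∃ (a : α) (l₁ l₂ l₃ : List α),
      p = l₁ ++ a :: l₂ ++ a :: l₃
  | [], h => absurd List.nodup_nil h
  | x :: t, h => by
    by_cases hx : x ∈ t
    · obtain ⟨s₁, s₂, rfl⟩ := List.append_of_mem hx
      exact ⟨x, [], s₁, s₂, by simp⟩
    · have ht : ¬ t.Nodup := fun hn => h (List.nodup_cons.mpr ⟨hx, hn⟩)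
      obtain ⟨a, l₁, l₂, l₃, rfl⟩ := exists_dup t ht
      exact ⟨a, x :: l₁, l₂, l₃, by simp⟩

theorem exists_dup_nodup {α : Type*} :
    ∀ (m : ℕ) (p : List α), p.length ≤ m → ¬ p.Nodup →
      ∃ (a : α) (l₁ l₂ l₃ : List α),
        p = l₁ ++ a :: l₂ ++ a :: l₃ ∧ (a :: l₂).Nodup := by
  intro m
  induction m with
  | zero =>
    intro p hp hnd
    interval_cases hl : p.length
    · rw [List.length_eq_zero_iff] at hl; subst hl; exact absurd List.nodup_nil hnd
  | succ m IH =>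
    intro p hp hnd
    obtain ⟨a, l₁, l₂, l₃, rfl⟩ := exists_dup p hnd
    by_cases h2 : (a :: l₂).Nodup
    · exact ⟨a, l₁, l₂, l₃, rfl, h2⟩
    · have hlen : (a :: l₂).length ≤ m := by
        simp only [List.length_append, List.length_cons] at hp ⊢
        omega
      obtain ⟨b, q₁, q₂, q₃, heq, hnd2⟩ := IH (a :: l₂) hlen h2
      refine ⟨b, l₁ ++ q₁, q₂, q₃ ++ a :: l₃, ?_, hnd2⟩
      have : l₁ ++ a :: l₂ ++ a :: l₃ = l₁ ++ (a :: l₂) ++ a :: l₃ := by simp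
      rw [this, heq]
      simp

theorem exists_nodup_walk (K : Fin n → Fin n → ℝ) (hdiag : ∀ i, K i i = 0)
    (hopt : ∀ σ : Equiv.Perm (Fin n), 0 ≤ ∑ i, K i (σ i)) :
    ∀ (m : ℕ) (p : List (Fin n)), p ≠ [] → p.length ≤ m →
      ∃ q : List (Fin n), q ≠ [] ∧ q.Nodup ∧ q.getLast? = p.getLast? ∧
        cost K q ≤ cost K p := by
  intro m
  induction m with
  | zero =>
    intro p hp hl
    simp [List.length_eq_zero_iff] at hl
    exact absurd hl hp
  | succ m IH =>
    intro p hp hl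
    by_cases hnd : p.Nodup
    · exact ⟨p, hp, hnd, rfl, le_refl _⟩
    obtain ⟨a, l₁, l₂, l₃, rfl, hnd2⟩ := exists_dup_nodup p.length p le_rfl hnd
    have hcostp : cost K (l₁ ++ a :: l₂ ++ a :: l₃)
        = cost K (l₁ ++ [a]) + cost K ((a :: l₂) ++ [a]) + cost K (a :: l₃) := by
      have e1 : l₁ ++ a :: l₂ ++ a :: l₃ = l₁ ++ a :: (l₂ ++ a :: l₃) := by simp
      rw [e1, cost_split K l₁ a (l₂ ++ a :: l₃)]
      have e2 : a :: (l₂ ++ a :: l₃) = (a :: l₂) ++ a :: l₃ := by simp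
      rw [e2, cost_split K (a :: l₂) a l₃]
      ring
    have hcyc := cycle_nonneg K hdiag hopt a l₂ hnd2
    have hcostp' : cost K (l₁ ++ a :: l₃)
        = cost K (l₁ ++ [a]) + cost K (a :: l₃) := cost_split K l₁ a l₃
    have hlast : (l₁ ++ a :: l₃).getLast? = (l₁ ++ a :: l₂ ++ a :: l₃).getLast? := by
      obtain ⟨y, hy⟩ : ∃ y, (a :: l₃).getLast? = some y :=
        ⟨(a :: l₃).getLast (by simp), List.getLast?_eq_getLast _⟩
      have e1 : l₁ ++ a :: l₂ ++ a :: l₃ = (l₁ ++ a :: l₂) ++ a :: l₃ := by simp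
      rw [e1, List.getLast?_append, List.getLast?_append, hy, Option.some_or, Option.some_or]
    have hlen' : (l₁ ++ a :: l₃).length ≤ m := by
      simp only [List.length_append, List.length_cons] at hl ⊢
      omega
    obtain ⟨q, hq1, hq2, hq3, hq4⟩ := IH (l₁ ++ a :: l₃) (by simp) hlen'
    exact ⟨q, hq1, hq2, hq3.trans hlast, by linarith⟩

end Stmt4Aux

open Stmt4Aux in
theorem stmt_4 {n : ℕ} (K : Fin n → Fin n → ℝ) (hdiag : ∀ i, K i i = 0)
    (hopt : ∀ σ : Equiv.Perm (Fin n), 0 ≤ ∑ i, K i (σ i)) :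
    ∃ v : Fin n → ℝ, ∀ i j, v j - v i ≤ K i j := by
  set C : ℝ := ∑ i : Fin n, ∑ j : Fin n, |K i j| with hCdef
  have hC0 : 0 ≤ C := Finset.sum_nonneg fun i _ =>
    Finset.sum_nonneg fun j _ => abs_nonneg _
  have hC : ∀ i j, -C ≤ K i j := by
    intro i j
    have h1 : |K i j| ≤ C := by
      calc |K i j| ≤ ∑ j' : Fin n, |K i j'| :=
            Finset.single_le_sum (f := fun j' => |K i j'|) (fun j' _ => abs_nonneg _) (Finset.mem_univ j)
        _ ≤ ∑ i' : Fin n, ∑ j' : Fin n, |K i' j'| := Finset.single_le_sum (f := fun i' => ∑ j' : Fin n, |K i' j'|)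
            (fun i' _ => Finset.sum_nonneg fun j' _ => abs_nonneg _)
            (Finset.mem_univ i)
        _ = C := hCdef.symm
    have := neg_abs_le (K i j)
    linarith
  set S : Fin n → Set ℝ := fun j =>
    {c | ∃ p : List (Fin n), p ≠ [] ∧ p.getLast? = some j ∧ cost K p = c}
    with hSdef
  have hne : ∀ j, (S j).Nonempty := fun j =>
    ⟨cost K [j], [j], by simp, by simp, rfl⟩
  have hlb : ∀ j, ∀ c ∈ S j, -((n : ℝ) * C) ≤ c := by
    rintro j c ⟨p, hp, hlast, rfl⟩
    obtain ⟨q, hq1, hq2, hq3, hq4⟩ :=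
      exists_nodup_walk K hdiag hopt p.length p hp le_rfl
    have hqlen : q.length ≤ n := by
      have := hq2.length_le_card
      simpa using this
    have h1 := cost_ge K C hC0 hC q
    have h2 : ((q.length : ℝ)) * C ≤ (n : ℝ) * C := by
      apply mul_le_mul_of_nonneg_right _ hC0
      exact_mod_cast hqlen
    linarith
  have hbdd : ∀ j, BddBelow (S j) := fun j => ⟨-((n : ℝ) * C), fun c hc => hlb j c hc⟩
  refine ⟨fun j => sInf (S j), ?_⟩
  intro i j
  have h1 : ∀ c ∈ S i, sInf (S j) ≤ c + K i j := by
    rintro c ⟨p, hp, hlast, rfl⟩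
    apply csInf_le (hbdd j)
    refine ⟨p ++ [j], by simp, by simp [List.getLast?_concat], ?_⟩
    rw [cost_concat K p hp j]
    have : p.getLast hp = i := by
      have := List.getLast?_eq_getLast hp
      rw [hlast] at this
      exact (Option.some.inj this).symm
    rw [this]
  have h2 : sInf (S j) - K i j ≤ sInf (S i) :=
    le_csInf (hne i) fun c hc => by linarith [h1 c hc]
  linarith
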